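/- arXiv:math/0506300 — 5 statements merged into one kernel-verified Lean document; each statement's English description precedes it below -/
import Mathlib

section
/- For every n >= 1 and every t in [-pi, pi], |phi_n(t)| <= exp( - t^2 v_n^2 / 6 ). -/
open MeasureTheory ProbabilityTheory Finset

lemma aux_one_sub_cos {t : ℝ} (ht : |t| ≤ Real.pi) : t ^ 2 / 6 ≤ 1 - Real.cos t := by
  have key : ∀ s : ℝ, 0 ≤ s → s ≤ Real.pi → s ^ 2 / 6 ≤ 1 - Real.cos s := by
    intro s hs hsπ
    have hπ := Real.pi_pos
    have h1 : 2 / Real.pi * (s / 2) ≤ Real.sin (s / 2) :=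
      Real.mul_le_sin (by linarith) (by linarith)
    have h2 : Real.cos s = 1 - 2 * Real.sin (s / 2) ^ 2 := by
      have h3 := Real.cos_two_mul (s / 2)
      have h4 := Real.sin_sq_add_cos_sq (s / 2)
      have h5 : 2 * (s / 2) = s := by ring
      rw [h5] at h3
      linarith
    have h5 : (2 / Real.pi * (s / 2)) ^ 2 ≤ Real.sin (s / 2) ^ 2 := by
      have h0 : 0 ≤ 2 / Real.pi * (s / 2) := by positivity
      nlinarith
    have hπ2 : Real.pi ≤ 3.15 := le_of_lt Real.pi_lt_d2
    have h6 : (2 / Real.pi * (s / 2)) ^ 2 = s ^ 2 / Real.pi ^ 2 := by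
      field_simp
    rw [h6] at h5
    have h7 : s ^ 2 / 6 ≤ 2 * s ^ 2 / Real.pi ^ 2 := by
      rw [div_le_div_iff₀ (by norm_num) (by positivity)]
      have hπsq : Real.pi ^ 2 ≤ 9.9225 := by nlinarith
      nlinarith [mul_le_mul_of_nonneg_left hπsq (sq_nonneg s)]
    have h8 : 2 * s ^ 2 / Real.pi ^ 2 = 2 * (s ^ 2 / Real.pi ^ 2) := by ring
    linarith [h5, h7, h8 ▸ h7]
  rcases le_or_gt 0 t with h | h
  · exact key t h (by rwa [abs_of_nonneg h] at ht)
  · have := key (-t) (by linarith) (by rwa [abs_of_neg h] at ht)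
    simpa using this

lemma indepFun_integral_mul_complex {Ω : Type*} [MeasurableSpace Ω] {μ : Measure Ω}
    {f g : Ω → ℂ} (h : IndepFun f g μ) (hf : Integrable f μ) (hg : Integrable g μ) :
    ∫ ω, f ω * g ω ∂μ = (∫ ω, f ω ∂μ) * ∫ ω, g ω ∂μ := by
  have hre : ∀ (φ ψ : ℂ → ℝ), Measurable φ → Measurable ψ →
      Integrable (fun ω => φ (f ω)) μ → Integrable (fun ω => ψ (g ω)) μ →
      ∫ ω, φ (f ω) * ψ (g ω) ∂μ = (∫ ω, φ (f ω) ∂μ) * ∫ ω, ψ (g ω) ∂μ := by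
    intro φ ψ hφ hψ hif hig
    have := IndepFun.integral_mul_eq_mul_integral (h.comp hφ hψ) hif.1 hig.1
    simpa [Pi.mul_def] using this
  have hfre : Integrable (fun ω => (f ω).re) μ := hf.re
  have hfim : Integrable (fun ω => (f ω).im) μ := hf.im
  have hgre : Integrable (fun ω => (g ω).re) μ := hg.re
  have hgim : Integrable (fun ω => (g ω).im) μ := hg.im
  have hmul : Integrable (fun ω => f ω * g ω) μ := by
    have := h.integrable_mul hf hg
    simpa [Pi.mul_def] using this
  have hp1 : Integrable (fun ω => (f ω).re * (g ω).re) μ := by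
    have := (h.comp Complex.measurable_re Complex.measurable_re).integrable_mul hfre hgre
    simpa [Pi.mul_def] using this
  have hp2 : Integrable (fun ω => (f ω).im * (g ω).im) μ := by
    have := (h.comp Complex.measurable_im Complex.measurable_im).integrable_mul hfim hgim
    simpa [Pi.mul_def] using this
  have hp3 : Integrable (fun ω => (f ω).re * (g ω).im) μ := by
    have := (h.comp Complex.measurable_re Complex.measurable_im).integrable_mul hfre hgim
    simpa [Pi.mul_def] using this
  have hp4 : Integrable (fun ω => (f ω).im * (g ω).re) μ := by
    have := (h.comp Complex.measurable_im Complex.measurable_re).integrable_mul hfim hgre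
    simpa [Pi.mul_def] using this
  have A := integral_re (𝕜 := ℂ) hmul
  have Af := integral_re (𝕜 := ℂ) hf
  have Ag := integral_re (𝕜 := ℂ) hg
  have B := integral_im (𝕜 := ℂ) hmul
  have Bf := integral_im (𝕜 := ℂ) hf
  have Bg := integral_im (𝕜 := ℂ) hg
  simp only [RCLike.re_to_complex] at A Af Ag
  simp only [RCLike.im_to_complex] at B Bf Bg
  apply Complex.ext
  · rw [← A, Complex.mul_re, ← Af, ← Ag, ← Bf, ← Bg]
    simp only [Complex.mul_re]
    rw [integral_sub hp1 hp2,
      hre _ _ Complex.measurable_re Complex.measurable_re hfre hgre,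
      hre _ _ Complex.measurable_im Complex.measurable_im hfim hgim]
  · rw [← B, Complex.mul_im, ← Af, ← Ag, ← Bf, ← Bg]
    simp only [Complex.mul_im]
    rw [integral_add hp3 hp4,
      hre _ _ Complex.measurable_re Complex.measurable_im hfre hgim,
      hre _ _ Complex.measurable_im Complex.measurable_re hfim hgre]

lemma iIndepFun_integral_prod_range {Ω : Type*} [MeasurableSpace Ω] {μ : Measure Ω}
    [IsProbabilityMeasure μ] {g : ℕ → Ω → ℂ}
    (hindep : iIndepFun g μ)
    (hmeas : ∀ j, Measurable (g j)) (hint : ∀ j, Integrable (g j) μ) (n : ℕ) :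
    ∫ ω, ∏ j ∈ range n, g j ω ∂μ = ∏ j ∈ range n, ∫ ω, g j ω ∂μ := by
  have hintprod : ∀ m : ℕ, Integrable (fun ω => ∏ j ∈ range m, g j ω) μ := by
    intro m
    induction m with
    | zero => simpa using integrable_const (1 : ℂ)
    | succ m ihm =>
      simp_rw [Finset.prod_range_succ]
      have hI : IndepFun (∏ j ∈ range m, g j) (g m) μ :=
        hindep.indepFun_prod_range_succ hmeas m
      have := hI.integrable_mul (by simpa [Finset.prod_fn] using ihm) (hint m)
      simpa [Pi.mul_def, Finset.prod_fn] using this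
  induction n with
  | zero => simp
  | succ n ih =>
    have hI : IndepFun (∏ j ∈ range n, g j) (g n) μ :=
      hindep.indepFun_prod_range_succ hmeas n
    have hmul := indepFun_integral_mul_complex hI
      (by simpa [Finset.prod_fn] using hintprod n) (hint n)
    simp_rw [Finset.prod_range_succ]
    rw [← ih]
    convert hmul using 2 <;> simp [Finset.prod_fn]

lemma aux_factor_bound {a t : ℝ} (ha0 : 0 ≤ a) (ha1 : a ≤ 1) (ht : |t| ≤ Real.pi) :
    ‖(1 : ℂ) + (Complex.exp (Complex.I * t) - 1) * (a : ℂ)‖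
      ≤ Real.exp (-(t ^ 2 * (a * (1 - a))) / 6) := by
  set z : ℂ := (1 : ℂ) + (Complex.exp (Complex.I * t) - 1) * (a : ℂ) with hz
  have hexp : Complex.exp (Complex.I * t) = Complex.ofReal (Real.cos t) +
      Complex.ofReal (Real.sin t) * Complex.I := by
    rw [mul_comm, Complex.exp_mul_I]
    norm_cast
  have hnormsq : ‖z‖ ^ 2 = 1 - 2 * (a * (1 - a) * (1 - Real.cos t)) := by
    rw [Complex.sq_norm]
    rw [hz, hexp]
    simp only [Complex.normSq_apply, Complex.add_re, Complex.add_im, Complex.mul_re,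
      Complex.mul_im, Complex.one_re, Complex.one_im, Complex.sub_re, Complex.sub_im,
      Complex.ofReal_re, Complex.ofReal_im, Complex.I_re, Complex.I_im]
    have hsc := Real.sin_sq_add_cos_sq t
    ring_nf
    nlinarith [hsc]
  set c : ℝ := a * (1 - a) * (1 - Real.cos t) with hc
  have hc0 : 0 ≤ c := by
    have h1 := Real.cos_le_one t
    have h2 : (0:ℝ) ≤ 1 - Real.cos t := by linarith
    have h3 : (0:ℝ) ≤ 1 - a := by linarith
    positivity
  have hle : ‖z‖ ^ 2 ≤ Real.exp (-(2 * c)) := by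
    rw [hnormsq]
    have := Real.add_one_le_exp (-(2 * c))
    linarith
  have hcos := aux_one_sub_cos ht
  have hkey : t ^ 2 * (a * (1 - a)) / 3 ≤ 2 * c := by
    have ha : 0 ≤ a * (1 - a) := mul_nonneg ha0 (by linarith)
    have h9 : a * (1 - a) * (t ^ 2 / 6) ≤ a * (1 - a) * (1 - Real.cos t) :=
      mul_le_mul_of_nonneg_left hcos ha
    rw [hc]
    nlinarith
  have hle2 : ‖z‖ ^ 2 ≤ Real.exp (-(t ^ 2 * (a * (1 - a))) / 6) ^ 2 := by
    rw [← Real.exp_nat_mul]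
    calc ‖z‖ ^ 2 ≤ Real.exp (-(2 * c)) := hle
      _ ≤ Real.exp ((2 : ℕ) * (-(t ^ 2 * (a * (1 - a))) / 6)) := by
          apply Real.exp_le_exp.mpr
          push_cast
          linarith
  nlinarith [norm_nonneg z, Real.exp_nonneg (-(t ^ 2 * (a * (1 - a))) / 6)]
/-- Lemma 2.1 (bound part): for `X_n` a sum of independent Bernoulli variables with
success probabilities `p j` and `v_n² = ∑ p_j q_j`, the characteristic function of the
centered sum satisfies `|φ_n(t)| ≤ exp(-t² v_n² / 6)` for all `t ∈ [-π, π]`. -/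
theorem charFn_of_sum_bernoulli_bound
    {Ω : Type*} [MeasurableSpace Ω] (μ : Measure Ω) [IsProbabilityMeasure μ]
    (X : ℕ → Ω → ℝ) (p : ℕ → ℝ)
    (hmeas : ∀ j, Measurable (X j))
    (h01 : ∀ j ω, X j ω = 0 ∨ X j ω = 1)
    (hindep : iIndepFun X μ)
    (hp : ∀ j, μ {ω | X j ω = 1} = ENNReal.ofReal (p j))
    (n : ℕ) (hn : 1 ≤ n) (t : ℝ) (ht : t ∈ Set.Icc (-Real.pi) Real.pi) :
    ‖∫ ω, Complex.exp (Complex.I * (t : ℂ) *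
        (((∑ j ∈ range n, X j ω) - ∑ j ∈ range n, p j : ℝ) : ℂ)) ∂μ‖
      ≤ Real.exp (-(t ^ 2 * ∑ j ∈ range n, p j * (1 - p j)) / 6) := by
  have htabs : |t| ≤ Real.pi := abs_le.mpr ⟨ht.1, ht.2⟩
  set g : ℕ → Ω → ℂ := fun j ω => Complex.exp (Complex.I * t * (X j ω : ℂ)) with hg
  have hgmeas : ∀ j, Measurable (g j) := fun j =>
    Complex.measurable_exp.comp
      (measurable_const.mul (Complex.measurable_ofReal.comp (hmeas j)))
  have hgnorm : ∀ j ω, ‖g j ω‖ = 1 := by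
    intro j ω
    rw [hg]
    simp only []
    rw [Complex.norm_exp]
    have h0 : (Complex.I * t * (X j ω : ℂ)).re = 0 := by simp
    rw [h0, Real.exp_zero]
  have hgint : ∀ j, Integrable (g j) μ := by
    intro j
    apply Integrable.mono' (integrable_const (1 : ℝ)) (hgmeas j).aestronglyMeasurable
    filter_upwards with ω
    rw [hgnorm j ω]
  have hgindep : iIndepFun g μ := by
    have hcm : Measurable (fun x : ℝ => Complex.exp (Complex.I * t * (x : ℂ))) :=
      Complex.measurable_exp.comp (measurable_const.mul Complex.measurable_ofReal)
    exact hindep.comp (fun _ => fun x : ℝ => Complex.exp (Complex.I * t * (x : ℂ))) (fun _ => hcm)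
  have hsplit : ∀ ω, Complex.exp (Complex.I * t *
      (((∑ j ∈ range n, X j ω) - ∑ j ∈ range n, p j : ℝ) : ℂ))
      = Complex.exp (Complex.I * t * (-(∑ j ∈ range n, p j : ℝ) : ℂ)) *
        ∏ j ∈ range n, g j ω := by
    intro ω
    rw [hg]
    simp only []
    rw [← Complex.exp_sum]
    rw [← Complex.exp_add]
    congr 1
    push_cast
    rw [← Finset.mul_sum]
    ring
  simp_rw [hsplit]
  rw [integral_const_mul, norm_mul]
  have hconst : ‖Complex.exp (Complex.I * t * (-(∑ j ∈ range n, p j : ℝ) : ℂ))‖ = 1 := by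
    rw [Complex.norm_exp]
    have h0 : (Complex.I * t * (-(∑ j ∈ range n, p j : ℝ) : ℂ)).re = 0 := by simp
    rw [h0, Real.exp_zero]
  rw [hconst, one_mul, iIndepFun_integral_prod_range hgindep hgmeas hgint n, norm_prod]
  have hfac : ∀ j, ‖∫ ω, g j ω ∂μ‖ ≤ Real.exp (-(t ^ 2 * (p j * (1 - p j))) / 6) := by
    intro j
    have hMj : MeasurableSet {ω | X j ω = 1} := (hmeas j) (measurableSet_singleton 1)
    set a : ℝ := (μ {ω | X j ω = 1}).toReal with ha
    have ha0 : 0 ≤ a := ENNReal.toReal_nonneg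
    have ha1 : a ≤ 1 := by
      rw [ha]
      have := prob_le_one (μ := μ) (s := {ω | X j ω = 1})
      simpa using ENNReal.toReal_mono (by simp) this
    have hXind : X j = Set.indicator {ω | X j ω = 1} 1 := by
      ext ω
      rcases h01 j ω with h | h
      · have hω : ω ∉ {ω | X j ω = 1} := by simp [h]
        simp [Set.indicator_apply, hω, h]
      · have hω : ω ∈ {ω | X j ω = 1} := h
        simp [Set.indicator_apply, hω, h]
    have hXint : Integrable (X j) μ := by
      apply Integrable.mono' (integrable_const (1 : ℝ)) (hmeas j).aestronglyMeasurable
      filter_upwards with ω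
      rcases h01 j ω with h | h <;> simp [h]
    have hXintegral : ∫ ω, X j ω ∂μ = a := by
      conv_lhs => rw [hXind]
      exact integral_indicator_one hMj
    have hgeq : ∀ ω, g j ω = 1 + (Complex.exp (Complex.I * t) - 1) * (X j ω : ℂ) := by
      intro ω
      rcases h01 j ω with h | h <;> rw [hg] <;> simp [h]
    have hint2 : ∫ ω, g j ω ∂μ = 1 + (Complex.exp (Complex.I * t) - 1) * (a : ℂ) := by
      simp_rw [hgeq]
      have hint3 : Integrable (fun ω => (Complex.exp (Complex.I * t) - 1) * ((X j ω : ℝ) : ℂ)) μ :=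
        (hXint.ofReal (𝕜 := ℂ)).const_mul _
      rw [integral_add (integrable_const (1:ℂ)) hint3, integral_const, integral_const_mul]
      have hcoe : ∫ ω, ((X j ω : ℂ)) ∂μ = ((a : ℝ) : ℂ) := by
        have h5 := integral_ofReal (𝕜 := ℂ) (f := X j) (μ := μ)
        rw [hXintegral] at h5
        exact h5
      rw [hcoe]
      simp
    rw [hint2]
    have hbound := aux_factor_bound ha0 ha1 htabs
    refine le_trans hbound (Real.exp_le_exp.mpr ?_)
    have hpq : p j * (1 - p j) ≤ a * (1 - a) := by
      rcases le_or_gt 0 (p j) with hpj | hpj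
      · have hap : a = p j := by rw [ha, hp j, ENNReal.toReal_ofReal hpj]
        rw [hap]
      · have hap : a = 0 := by
          rw [ha, hp j, ENNReal.ofReal_of_nonpos (le_of_lt hpj)]
          simp
        rw [hap]
        nlinarith
    have ht2 : (0:ℝ) ≤ t ^ 2 := sq_nonneg t
    nlinarith
  calc ∏ j ∈ range n, ‖∫ ω, g j ω ∂μ‖
      ≤ ∏ j ∈ range n, Real.exp (-(t ^ 2 * (p j * (1 - p j))) / 6) :=
        Finset.prod_le_prod (fun j _ => norm_nonneg _) (fun j _ => hfac j)
    _ = Real.exp (∑ j ∈ range n, -(t ^ 2 * (p j * (1 - p j))) / 6) := by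
        rw [Real.exp_sum]
    _ = Real.exp (-(t ^ 2 * ∑ j ∈ range n, p j * (1 - p j)) / 6) := by
        congr 1
        rw [Finset.mul_sum, neg_div, ← Finset.sum_div]
        simp [neg_div]
end

section
/- Assume Condition 2.1 holds with constants epsilon > 0 and n_epsilon. Let K > 0, let C >= 6 K / epsilon, and set a_n = sqrt( C log n / n ). Then for every bounded measurable function f on [-pi, pi] and every n >= n_epsilon with a_n <= pi, | Integral_{a_n < |t| <= pi} f(t) phi_n(t) dt | <= 2 pi ||f||_infty n^{-K}, where ||f||_infty = sup_{|t| <= pi} |f(t)|. -/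
open MeasureTheory ProbabilityTheory Finset

lemma indepFun_integral_mul_c {Ω : Type*} [MeasurableSpace Ω] {μ : Measure Ω}
    {X Y : Ω → ℂ} (h : IndepFun X Y μ) (hX : Integrable X μ) (hY : Integrable Y μ) :
    ∫ ω, X ω * Y ω ∂μ = (∫ ω, X ω ∂μ) * ∫ ω, Y ω ∂μ := by
  have mre : Measurable fun z : ℂ => z.re := Complex.measurable_re
  have mim : Measurable fun z : ℂ => z.im := Complex.measurable_im
  have hXr : Integrable (fun ω => (X ω).re) μ := by simpa using hX.re
  have hXi : Integrable (fun ω => (X ω).im) μ := by simpa using hX.im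
  have hYr : Integrable (fun ω => (Y ω).re) μ := by simpa using hY.re
  have hYi : Integrable (fun ω => (Y ω).im) μ := by simpa using hY.im
  have hrr : ∫ ω, (X ω).re * (Y ω).re ∂μ = (∫ ω, (X ω).re ∂μ) * ∫ ω, (Y ω).re ∂μ :=
    (h.comp mre mre).integral_mul_eq_mul_integral hXr.aestronglyMeasurable hYr.aestronglyMeasurable
  have hri : ∫ ω, (X ω).re * (Y ω).im ∂μ = (∫ ω, (X ω).re ∂μ) * ∫ ω, (Y ω).im ∂μ :=
    (h.comp mre mim).integral_mul_eq_mul_integral hXr.aestronglyMeasurable hYi.aestronglyMeasurable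
  have hir : ∫ ω, (X ω).im * (Y ω).re ∂μ = (∫ ω, (X ω).im ∂μ) * ∫ ω, (Y ω).re ∂μ :=
    (h.comp mim mre).integral_mul_eq_mul_integral hXi.aestronglyMeasurable hYr.aestronglyMeasurable
  have hii : ∫ ω, (X ω).im * (Y ω).im ∂μ = (∫ ω, (X ω).im ∂μ) * ∫ ω, (Y ω).im ∂μ :=
    (h.comp mim mim).integral_mul_eq_mul_integral hXi.aestronglyMeasurable hYi.aestronglyMeasurable
  have irr : Integrable (fun ω => (X ω).re * (Y ω).re) μ := by
    exact (h.comp mre mre).integrable_mul hXr hYr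
  have iri : Integrable (fun ω => (X ω).re * (Y ω).im) μ := by
    exact (h.comp mre mim).integrable_mul hXr hYi
  have iir : Integrable (fun ω => (X ω).im * (Y ω).re) μ := by
    exact (h.comp mim mre).integrable_mul hXi hYr
  have iii : Integrable (fun ω => (X ω).im * (Y ω).im) μ := by
    exact (h.comp mim mim).integrable_mul hXi hYi
  have hXY : Integrable (fun ω => X ω * Y ω) μ := by
    exact h.integrable_mul hX hY
  apply Complex.ext
  · have h1 : (∫ ω, X ω * Y ω ∂μ).re = ∫ ω, (X ω * Y ω).re ∂μ := by
      simpa using (integral_re hXY).symm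
    have h2 : (∫ ω, X ω ∂μ).re = ∫ ω, (X ω).re ∂μ := by simpa using (integral_re hX).symm
    have h3 : (∫ ω, Y ω ∂μ).re = ∫ ω, (Y ω).re ∂μ := by simpa using (integral_re hY).symm
    have h4 : (∫ ω, X ω ∂μ).im = ∫ ω, (X ω).im ∂μ := by simpa using (integral_im hX).symm
    have h5 : (∫ ω, Y ω ∂μ).im = ∫ ω, (Y ω).im ∂μ := by simpa using (integral_im hY).symm
    rw [h1, Complex.mul_re, h2, h3, h4, h5]
    simp only [Complex.mul_re]
    rw [integral_sub irr iii]
    rw [show (∫ ω, (X ω).re * (Y ω).re ∂μ) = (∫ ω, (X ω).re ∂μ) * ∫ ω, (Y ω).re ∂μ from hrr,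
      show (∫ ω, (X ω).im * (Y ω).im ∂μ) = (∫ ω, (X ω).im ∂μ) * ∫ ω, (Y ω).im ∂μ from hii]
  · have h1 : (∫ ω, X ω * Y ω ∂μ).im = ∫ ω, (X ω * Y ω).im ∂μ := by
      simpa using (integral_im hXY).symm
    have h2 : (∫ ω, X ω ∂μ).re = ∫ ω, (X ω).re ∂μ := by simpa using (integral_re hX).symm
    have h3 : (∫ ω, Y ω ∂μ).re = ∫ ω, (Y ω).re ∂μ := by simpa using (integral_re hY).symm
    have h4 : (∫ ω, X ω ∂μ).im = ∫ ω, (X ω).im ∂μ := by simpa using (integral_im hX).symm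
    have h5 : (∫ ω, Y ω ∂μ).im = ∫ ω, (Y ω).im ∂μ := by simpa using (integral_im hY).symm
    rw [h1, Complex.mul_im, h2, h3, h4, h5]
    simp only [Complex.mul_im]
    rw [integral_add iri iir]
    rw [show (∫ ω, (X ω).re * (Y ω).im ∂μ) = (∫ ω, (X ω).re ∂μ) * ∫ ω, (Y ω).im ∂μ from hri,
      show (∫ ω, (X ω).im * (Y ω).re ∂μ) = (∫ ω, (X ω).im ∂μ) * ∫ ω, (Y ω).re ∂μ from hir]

lemma integral_prod_of_iIndep {Ω : Type*} [MeasurableSpace Ω] {μ : Measure Ω}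
    [IsProbabilityMeasure μ] {g : ℕ → Ω → ℂ}
    (hind : iIndepFun g μ)
    (hmeas : ∀ j, Measurable (g j)) (hnorm : ∀ j ω, ‖g j ω‖ ≤ 1) (n : ℕ) :
    ∫ ω, ∏ j ∈ range n, g j ω ∂μ = ∏ j ∈ range n, ∫ ω, g j ω ∂μ := by
  induction n with
  | zero => simp
  | succ n ih =>
    have hpm : Measurable fun ω => ∏ j ∈ range n, g j ω :=
      Finset.measurable_prod _ (fun j _ => hmeas j)
    have hpi : Integrable (fun ω => ∏ j ∈ range n, g j ω) μ := by
      refine Integrable.mono' (integrable_const 1) hpm.aestronglyMeasurable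
        (Filter.Eventually.of_forall fun ω => ?_)
      calc ‖∏ j ∈ range n, g j ω‖ = ∏ j ∈ range n, ‖g j ω‖ := norm_prod _ _
        _ ≤ ∏ j ∈ range n, 1 :=
          Finset.prod_le_prod (fun _ _ => norm_nonneg _) (fun j _ => hnorm j ω)
        _ = 1 := by simp
    have hni : Integrable (g n) μ :=
      Integrable.mono' (integrable_const 1) (hmeas n).aestronglyMeasurable
        (Filter.Eventually.of_forall fun ω => hnorm n ω)
    have hIF : IndepFun (fun ω => ∏ j ∈ range n, g j ω) (g n) μ := by
      have := hind.indepFun_prod_range_succ hmeas n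
      have he : (∏ j ∈ range n, g j) = fun ω => ∏ j ∈ range n, g j ω := by
        funext ω; simp
      rwa [he] at this
    simp only [Finset.prod_range_succ]
    rw [indepFun_integral_mul_c hIF hpi hni, ih]

set_option maxHeartbeats 1000000 in
/-- Lemma 2.3: under Condition 2.1 (`v_n² ≥ ε n` for `n ≥ n_ε`), for `K > 0`,
`C ≥ 6K/ε` and `a_n = √(C log n / n)`, for any bounded measurable `f` on `[-π, π]`
with bound `M`, `|∫_{a_n < |t| ≤ π} f(t) φ_n(t) dt| ≤ 2π M n^{-K}`. -/
theorem tail_integral_of_charFn_bound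
    {Ω : Type*} [MeasurableSpace Ω] (μ : Measure Ω) [IsProbabilityMeasure μ]
    (X : ℕ → Ω → ℝ) (p : ℕ → ℝ)
    (hmeas : ∀ j, Measurable (X j))
    (h01 : ∀ j ω, X j ω = 0 ∨ X j ω = 1)
    (hindep : iIndepFun X μ)
    (hp : ∀ j, μ {ω | X j ω = 1} = ENNReal.ofReal (p j))
    (ε : ℝ) (hε : 0 < ε) (nε : ℕ)
    (hcond : ∀ n : ℕ, nε ≤ n → ε * n ≤ ∑ j ∈ range n, p j * (1 - p j))
    (K C : ℝ) (hK : 0 < K) (hC : 6 * K / ε ≤ C)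
    (f : ℝ → ℝ) (hf : Measurable f) (M : ℝ)
    (hM : ∀ t ∈ Set.Icc (-Real.pi) Real.pi, |f t| ≤ M)
    (n : ℕ) (hn1 : 1 ≤ n) (hn : nε ≤ n)
    (ha : Real.sqrt (C * Real.log n / n) ≤ Real.pi) :
    ‖∫ t in {t : ℝ | Real.sqrt (C * Real.log n / n) < |t| ∧ |t| ≤ Real.pi},
        (f t : ℂ) * ∫ ω, Complex.exp (Complex.I * (t : ℂ) *
          (((∑ j ∈ range n, X j ω) - ∑ j ∈ range n, p j : ℝ) : ℂ)) ∂μ‖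
      ≤ 2 * Real.pi * M * (n : ℝ) ^ (-K) := by
  have hπ := Real.pi_pos
  have hn0 : (0:ℝ) < n := by exact_mod_cast hn1
  have hL : (0:ℝ) ≤ Real.log n := Real.log_nonneg (by exact_mod_cast hn1)
  have hC0 : 0 < C := lt_of_lt_of_le (by positivity) hC
  set a : ℝ := Real.sqrt (C * Real.log n / n) with hadef
  set S : Set ℝ := {t : ℝ | a < |t| ∧ |t| ≤ Real.pi} with hSdef
  set c : ℝ := ∑ j ∈ range n, p j with hcdef
  -- probabilities
  set q : ℕ → ℝ := fun j => (μ {ω | X j ω = 1}).toReal with hqdef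
  have hq01 : ∀ j, 0 ≤ q j ∧ q j ≤ 1 := by
    intro j
    constructor
    · exact ENNReal.toReal_nonneg
    · have : μ {ω | X j ω = 1} ≤ 1 := prob_le_one
      exact ENNReal.toReal_le_of_le_ofReal (by norm_num) (by simpa using this)
  have hqp : ∀ j, p j * (1 - p j) ≤ q j * (1 - q j) := by
    intro j
    have hq_eq : q j = max (p j) 0 := by
      rw [hqdef]; simp only [hp j]; exact ENNReal.toReal_ofReal'
    rcases le_or_gt 0 (p j) with h | h
    · rw [hq_eq, max_eq_left h]
    · rw [hq_eq, max_eq_right h.le]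
      nlinarith
  have hvar : ε * n ≤ ∑ j ∈ range n, q j * (1 - q j) := by
    refine le_trans (hcond n hn) (Finset.sum_le_sum fun j _ => hqp j)
  -- integral of X j
  have hXint : ∀ j, Integrable (X j) μ := by
    intro j
    refine Integrable.mono' (integrable_const 1) (hmeas j).aestronglyMeasurable
      (Filter.Eventually.of_forall fun ω => ?_)
    rcases h01 j ω with h | h <;> simp [h]
  have hXavg : ∀ j, ∫ ω, X j ω ∂μ = q j := by
    intro j
    have hset : MeasurableSet {ω | X j ω = 1} := by
      have : {ω | X j ω = 1} = X j ⁻¹' {1} := rfl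
      rw [this]; exact (hmeas j) (measurableSet_singleton 1)
    have hind : X j = Set.indicator {ω | X j ω = 1} (fun _ => (1:ℝ)) := by
      funext ω
      rcases h01 j ω with h | h
      · rw [h, Set.indicator_apply]
        have : ω ∉ {ω | X j ω = 1} := by simp [Set.mem_setOf_eq, h]
        simp [this]
      · rw [h, Set.indicator_apply]
        have : ω ∈ {ω | X j ω = 1} := h
        simp [this]
    calc ∫ ω, X j ω ∂μ = ∫ ω, Set.indicator {ω | X j ω = 1} (fun _ => (1:ℝ)) ω ∂μ := by
          rw [← hind]
      _ = (μ {ω | X j ω = 1}).toReal • (1:ℝ) := integral_indicator_const (1:ℝ) hset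
      _ = q j := by simp [hqdef]
  -- the key characteristic function bound
  have hchar : ∀ t ∈ S,
      ‖∫ ω, Complex.exp (Complex.I * (t : ℂ) *
          (((∑ j ∈ range n, X j ω) - c : ℝ) : ℂ)) ∂μ‖ ≤ (n : ℝ) ^ (-K) := by
    intro t ht
    obtain ⟨hta, htπ⟩ := ht
    set g : ℕ → Ω → ℂ := fun j ω => Complex.exp (Complex.I * (t:ℂ) * (X j ω : ℂ)) with hgdef
    have hgm : ∀ j, Measurable (g j) := by
      intro j
      exact Complex.measurable_exp.comp
        ((Complex.measurable_ofReal.comp (hmeas j)).const_mul _)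
    have hgnorm : ∀ j ω, ‖g j ω‖ = 1 := by
      intro j ω
      rw [hgdef]
      simp only [Complex.norm_exp]
      have : (Complex.I * (t:ℂ) * ((X j ω : ℝ):ℂ)).re = 0 := by
        simp [Complex.mul_re, Complex.mul_im]
      rw [this, Real.exp_zero]
    have hgint : ∀ j, Integrable (g j) μ := fun j =>
      Integrable.mono' (integrable_const 1) (hgm j).aestronglyMeasurable
        (Filter.Eventually.of_forall fun ω => (hgnorm j ω).le)
    have hgind : iIndepFun g μ :=
      hindep.comp (fun _ x => Complex.exp (Complex.I * (t:ℂ) * (x : ℂ)))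
        (fun _ => Complex.measurable_exp.comp (Complex.measurable_ofReal.const_mul _))
    -- pointwise factorization
    have hpt : ∀ ω, Complex.exp (Complex.I * (t : ℂ) *
        (((∑ j ∈ range n, X j ω) - c : ℝ) : ℂ))
        = Complex.exp (Complex.I * (t:ℂ) * (-(c:ℂ))) * ∏ j ∈ range n, g j ω := by
      intro ω
      have h1 : Complex.I * (t : ℂ) * (((∑ j ∈ range n, X j ω) - c : ℝ) : ℂ)
          = Complex.I * (t:ℂ) * (-(c:ℂ))
            + ∑ j ∈ range n, Complex.I * (t:ℂ) * (X j ω : ℂ) := by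
        push_cast
        rw [← Finset.mul_sum]
        ring
      rw [h1, Complex.exp_add, Complex.exp_sum]
    have hsplit : (∫ ω, Complex.exp (Complex.I * (t : ℂ) *
        (((∑ j ∈ range n, X j ω) - c : ℝ) : ℂ)) ∂μ)
        = Complex.exp (Complex.I * (t:ℂ) * (-(c:ℂ)))
          * ∫ ω, ∏ j ∈ range n, g j ω ∂μ := by
      rw [show (fun ω => Complex.exp (Complex.I * (t : ℂ) *
        (((∑ j ∈ range n, X j ω) - c : ℝ) : ℂ)))
        = fun ω => Complex.exp (Complex.I * (t:ℂ) * (-(c:ℂ))) * ∏ j ∈ range n, g j ω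
        from funext hpt]
      exact integral_const_mul _ _
    have hprod := integral_prod_of_iIndep hgind hgm (fun j ω => (hgnorm j ω).le) n
    -- compute ∫ g j
    have hgval : ∀ j, ∫ ω, g j ω ∂μ
        = 1 + (Complex.exp (Complex.I * (t:ℂ)) - 1) * (q j : ℂ) := by
      intro j
      have heq : ∀ ω, g j ω = 1 + (Complex.exp (Complex.I * (t:ℂ)) - 1) * (X j ω : ℂ) := by
        intro ω
        rcases h01 j ω with h | h
        · simp [hgdef, h]
        · simp [hgdef, h]
      have hXc : Integrable (fun ω => ((X j ω : ℝ):ℂ)) μ := (hXint j).ofReal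
      calc ∫ ω, g j ω ∂μ
          = ∫ ω, (1 + (Complex.exp (Complex.I * (t:ℂ)) - 1) * (X j ω : ℂ)) ∂μ := by
            exact integral_congr_ae (Filter.Eventually.of_forall heq)
        _ = (∫ _, (1:ℂ) ∂μ)
            + ∫ ω, (Complex.exp (Complex.I * (t:ℂ)) - 1) * (X j ω : ℂ) ∂μ := by
            exact integral_add (integrable_const 1) (hXc.const_mul _)
        _ = 1 + (Complex.exp (Complex.I * (t:ℂ)) - 1) * ∫ ω, ((X j ω : ℝ):ℂ) ∂μ := by
            rw [integral_const_mul]; simp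
        _ = 1 + (Complex.exp (Complex.I * (t:ℂ)) - 1) * (q j : ℂ) := by
            have hoR : ∫ ω, ((X j ω : ℝ):ℂ) ∂μ = ((∫ ω, X j ω ∂μ : ℝ) : ℂ) := integral_ofReal
            rw [hoR, hXavg j]
    -- bound each factor
    have hfac : ∀ j, ‖∫ ω, g j ω ∂μ‖
        ≤ Real.exp (-(q j * (1 - q j)) * (1 - Real.cos t)) := by
      intro j
      obtain ⟨hq0, hq1⟩ := hq01 j
      rw [hgval j]
      have he : Complex.exp (Complex.I * (t:ℂ))
          = ((Real.cos t : ℝ):ℂ) + ((Real.sin t : ℝ):ℂ) * Complex.I := by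
        rw [mul_comm, Complex.exp_mul_I, Complex.ofReal_cos, Complex.ofReal_sin]
      have hz : 1 + (Complex.exp (Complex.I * (t:ℂ)) - 1) * (q j : ℂ)
          = ((1 - q j + q j * Real.cos t : ℝ):ℂ) + ((q j * Real.sin t : ℝ):ℂ) * Complex.I := by
        rw [he]; push_cast; ring
      rw [hz]
      have hsq : ‖((1 - q j + q j * Real.cos t : ℝ):ℂ)
          + ((q j * Real.sin t : ℝ):ℂ) * Complex.I‖ ^ 2
          = 1 - 2 * (q j * (1 - q j)) * (1 - Real.cos t) := by
        rw [Complex.sq_norm, Complex.normSq_add_mul_I]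
        linear_combination (q j)^2 * Real.sin_sq_add_cos_sq t
      have hexp2 : ‖((1 - q j + q j * Real.cos t : ℝ):ℂ)
          + ((q j * Real.sin t : ℝ):ℂ) * Complex.I‖ ^ 2
          ≤ Real.exp (-(q j * (1 - q j)) * (1 - Real.cos t)) ^ 2 := by
        rw [← Real.exp_nat_mul]
        rw [hsq]
        have := Real.add_one_le_exp (-2 * (q j * (1 - q j)) * (1 - Real.cos t))
        calc 1 - 2 * (q j * (1 - q j)) * (1 - Real.cos t)
            ≤ Real.exp (-2 * (q j * (1 - q j)) * (1 - Real.cos t)) := by linarith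
          _ = Real.exp ((2:ℕ) * (-(q j * (1 - q j)) * (1 - Real.cos t))) := by
              push_cast; ring_nf
      calc ‖((1 - q j + q j * Real.cos t : ℝ):ℂ) + ((q j * Real.sin t : ℝ):ℂ) * Complex.I‖
          = Real.sqrt (‖((1 - q j + q j * Real.cos t : ℝ):ℂ)
              + ((q j * Real.sin t : ℝ):ℂ) * Complex.I‖ ^ 2) := by
            rw [Real.sqrt_sq (norm_nonneg _)]
        _ ≤ Real.sqrt (Real.exp (-(q j * (1 - q j)) * (1 - Real.cos t)) ^ 2) :=
            Real.sqrt_le_sqrt hexp2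
        _ = Real.exp (-(q j * (1 - q j)) * (1 - Real.cos t)) := by
            rw [Real.sqrt_sq (Real.exp_nonneg _)]
    -- combine
    have hnorm1 : ‖Complex.exp (Complex.I * (t:ℂ) * (-(c:ℂ)))‖ = 1 := by
      simp only [Complex.norm_exp]
      have : (Complex.I * (t:ℂ) * (-(c:ℂ))).re = 0 := by
        simp [Complex.mul_re, Complex.mul_im]
      rw [this, Real.exp_zero]
    rw [hsplit, norm_mul, hnorm1, one_mul, hprod, norm_prod]
    have step1 : ∏ j ∈ range n, ‖∫ ω, g j ω ∂μ‖
        ≤ ∏ j ∈ range n, Real.exp (-(q j * (1 - q j)) * (1 - Real.cos t)) :=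
      Finset.prod_le_prod (fun j _ => norm_nonneg _) (fun j _ => hfac j)
    have step2 : ∏ j ∈ range n, Real.exp (-(q j * (1 - q j)) * (1 - Real.cos t))
        = Real.exp (∑ j ∈ range n, -(q j * (1 - q j)) * (1 - Real.cos t)) :=
      (Real.exp_sum _ _).symm
    have hcos1 : 1 - Real.cos t ≥ 0 := by linarith [Real.cos_le_one t]
    have hsum : ∑ j ∈ range n, -(q j * (1 - q j)) * (1 - Real.cos t)
        = -(∑ j ∈ range n, q j * (1 - q j)) * (1 - Real.cos t) := by
      rw [← Finset.sum_mul, ← Finset.sum_neg_distrib]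
    have step3 : Real.exp (-(∑ j ∈ range n, q j * (1 - q j)) * (1 - Real.cos t))
        ≤ Real.exp (-(ε * n) * (1 - Real.cos t)) := by
      apply Real.exp_le_exp.mpr
      nlinarith [hvar, hcos1]
    -- the exponent bound
    have hta2 : C * Real.log n / n ≤ t ^ 2 := by
      have h0 : (0:ℝ) ≤ C * Real.log n / n := by positivity
      have : a ^ 2 ≤ |t| ^ 2 := by
        apply pow_le_pow_left₀ (Real.sqrt_nonneg _) hta.le
      rwa [hadef, Real.sq_sqrt h0, sq_abs] at this
    have hcosq : 2 / Real.pi ^ 2 * t ^ 2 ≤ 1 - Real.cos t := by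
      have := Real.cos_le_one_sub_mul_cos_sq htπ
      linarith
    have hKL : K * Real.log n ≤ ε * n * (1 - Real.cos t) := by
      have hπ12 : Real.pi ^ 2 ≤ 12 := by nlinarith [Real.pi_lt_d2, Real.pi_pos]
      have h6K : 6 * K ≤ ε * C := by
        rw [div_le_iff₀ hε] at hC; linarith
      have h1 : K * Real.pi ^ 2 ≤ 2 * (ε * C) := by nlinarith
      have h2 : ε * n * (2 / Real.pi ^ 2 * (C * Real.log n / n))
          = 2 * ε * C * Real.log n / Real.pi ^ 2 := by
        field_simp
      have h3 : K * Real.log n ≤ 2 * ε * C * Real.log n / Real.pi ^ 2 := by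
        have hKle : K ≤ 2 * ε * C / Real.pi ^ 2 := by
          rw [le_div_iff₀ (by positivity)]; nlinarith
        calc K * Real.log n ≤ (2 * ε * C / Real.pi ^ 2) * Real.log n :=
              mul_le_mul_of_nonneg_right hKle hL
          _ = 2 * ε * C * Real.log n / Real.pi ^ 2 := by ring
      calc K * Real.log n ≤ 2 * ε * C * Real.log n / Real.pi ^ 2 := h3
        _ = ε * n * (2 / Real.pi ^ 2 * (C * Real.log n / n)) := h2.symm
        _ ≤ ε * n * (2 / Real.pi ^ 2 * t ^ 2) := by
            apply mul_le_mul_of_nonneg_left _ (by positivity)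
            apply mul_le_mul_of_nonneg_left hta2 (by positivity)
        _ ≤ ε * n * (1 - Real.cos t) := by
            apply mul_le_mul_of_nonneg_left hcosq (by positivity)
    have step4 : Real.exp (-(ε * n) * (1 - Real.cos t)) ≤ (n : ℝ) ^ (-K) := by
      rw [Real.rpow_def_of_pos hn0]
      apply Real.exp_le_exp.mpr
      nlinarith [hKL]
    calc ∏ j ∈ range n, ‖∫ ω, g j ω ∂μ‖
        ≤ Real.exp (-(∑ j ∈ range n, q j * (1 - q j)) * (1 - Real.cos t)) := by
          rw [← hsum, ← step2]; exact step1
      _ ≤ Real.exp (-(ε * n) * (1 - Real.cos t)) := step3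
      _ ≤ (n : ℝ) ^ (-K) := step4
  -- final set-integral estimate
  have hM0 : 0 ≤ M := le_trans (abs_nonneg _) (hM 0 ⟨by linarith, by linarith⟩)
  have hSm : MeasurableSet S := by
    apply MeasurableSet.inter
    · exact measurableSet_lt measurable_const continuous_abs.measurable
    · exact measurableSet_le continuous_abs.measurable measurable_const
  have hsub : S ⊆ Set.Icc (-Real.pi) Real.pi := by
    intro t ht
    exact abs_le.mp ht.2
  have hvol_le : volume S ≤ ENNReal.ofReal (2 * Real.pi) := by
    calc volume S ≤ volume (Set.Icc (-Real.pi) Real.pi) := measure_mono hsub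
      _ = ENNReal.ofReal (2 * Real.pi) := by rw [Real.volume_Icc]; ring_nf
  have hfin : volume S < ⊤ := lt_of_le_of_lt hvol_le ENNReal.ofReal_lt_top
  have hvol : (volume S).toReal ≤ 2 * Real.pi := by
    have := ENNReal.toReal_mono ENNReal.ofReal_ne_top hvol_le
    rwa [ENNReal.toReal_ofReal (by positivity)] at this
  have hbound : ∀ t ∈ S, ‖(f t : ℂ) * ∫ ω, Complex.exp (Complex.I * (t : ℂ) *
      (((∑ j ∈ range n, X j ω) - c : ℝ) : ℂ)) ∂μ‖ ≤ M * (n : ℝ) ^ (-K) := by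
    intro t ht
    rw [norm_mul, Complex.norm_real]
    have h1 : ‖f t‖ ≤ M := hM t (hsub ht)
    have h2 := hchar t ht
    exact mul_le_mul h1 h2 (norm_nonneg _) hM0
  calc ‖∫ t in S, (f t : ℂ) * ∫ ω, Complex.exp (Complex.I * (t : ℂ) *
        (((∑ j ∈ range n, X j ω) - c : ℝ) : ℂ)) ∂μ‖
      ≤ M * (n : ℝ) ^ (-K) * (volume S).toReal :=
        norm_setIntegral_le_of_norm_le_const hfin hbound
    _ ≤ M * (n : ℝ) ^ (-K) * (2 * Real.pi) := by
        apply mul_le_mul_of_nonneg_left hvol (by positivity)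
    _ = 2 * Real.pi * M * (n : ℝ) ^ (-K) := by ring
end

section
/- Assume Condition 3.1 holds and let gamma be in (0, 1]. Then there exist epsilon_gamma > 0 and an integer n_gamma, depending only on gamma and the Condition 3.1 data, such that for every finite set E of natural numbers with |E| >= n_gamma and every lambda in [gamma, 1/gamma], v_{E,lambda}^2 = sum_{A in E} p_{A,lambda} q_{A,lambda} >= epsilon_gamma |E|. -/
open Finset

/-- pq lower bound for t ∈ [m, M]. -/
lemma pq_lb {t m M : ℝ} (hm : 0 < m) (h1 : m ≤ t) (h2 : t ≤ M) :
    m / (1 + M)^2 ≤ (t / (1 + t)) * (1 - t / (1 + t)) := by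
  have ht : 0 < t := lt_of_lt_of_le hm h1
  have h1t : 0 < 1 + t := by linarith
  have h1M : 0 < 1 + M := by linarith
  have : (t / (1 + t)) * (1 - t / (1 + t)) = t / (1 + t)^2 := by
    field_simp
    ring
  rw [this]
  gcongr
  all_goals nlinarith

/-- Lemma 3.1: under Condition 3.1 on the weights `x`, for `γ ∈ (0,1]` there exist
`ε_γ > 0` and `n_γ` such that `v_{E,λ}² = ∑_{A ∈ E} p_{A,λ} q_{A,λ} ≥ ε_γ |E|` for all
`λ ∈ [γ, 1/γ]` and all finite `E` with `|E| ≥ n_γ`. -/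
theorem variance_lower_bound_of_stable_weights
    (x : ℕ → ℝ) (hx : ∀ A, 0 < x A)
    (hcond : ∀ δ : ℝ, δ ∈ Set.Ioo (0 : ℝ) 1 → ∃ ε : ℝ, ε ∈ Set.Ioo (0 : ℝ) 1 ∧ ∃ n : ℕ, 1 ≤ n ∧
      ∀ E : Finset ℕ, n ≤ E.card →
        1 - δ ≤ ((E.card : ℝ))⁻¹ * ∑ A ∈ E, (if x A ∈ Set.Icc ε ε⁻¹ then (1 : ℝ) else 0))
    (γ : ℝ) (hγ : γ ∈ Set.Ioc (0 : ℝ) 1) :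
    ∃ εγ : ℝ, 0 < εγ ∧ ∃ nγ : ℕ, ∀ E : Finset ℕ, nγ ≤ E.card →
      ∀ lam : ℝ, lam ∈ Set.Icc γ γ⁻¹ →
        εγ * E.card ≤
          ∑ A ∈ E, (lam * x A / (1 + lam * x A)) * (1 - lam * x A / (1 + lam * x A)) := by
  obtain ⟨hγ0, hγ1⟩ := hγ
  obtain ⟨ε, ⟨hε0, hε1⟩, n, hn1, hE⟩ := hcond (1/2) ⟨by norm_num, by norm_num⟩
  set m : ℝ := γ * ε with hm
  set M : ℝ := γ⁻¹ * ε⁻¹ with hM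
  have hm0 : 0 < m := mul_pos hγ0 hε0
  have hM0 : 0 < M := mul_pos (by positivity) (by positivity)
  set c : ℝ := m / (1 + M)^2 with hc
  have hc0 : 0 < c := by positivity
  refine ⟨c / 2, by positivity, n, fun E hcard lam ⟨hl1, hl2⟩ => ?_⟩
  have hcardR : (0 : ℝ) < E.card := by
    exact_mod_cast lt_of_lt_of_le hn1 hcard
  have key := hE E hcard
  -- ∑ pq ≥ ∑ c * indicator
  have step1 : ∀ A ∈ E, c * (if x A ∈ Set.Icc ε ε⁻¹ then (1 : ℝ) else 0) ≤
      (lam * x A / (1 + lam * x A)) * (1 - lam * x A / (1 + lam * x A)) := by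
    intro A _
    by_cases h : x A ∈ Set.Icc ε ε⁻¹
    · simp only [h, if_pos, mul_one]
      obtain ⟨ha, hb⟩ := h
      have hlam0 : 0 < lam := lt_of_lt_of_le hγ0 hl1
      apply pq_lb hm0
      · exact mul_le_mul hl1 ha hε0.le hlam0.le
      · exact mul_le_mul hl2 hb (hx A).le (by positivity)
    · simp only [h, if_neg, mul_zero, not_false_iff]
      have t0 : 0 < lam * x A := mul_pos (lt_of_lt_of_le hγ0 hl1) (hx A)
      have h1t : 0 < 1 + lam * x A := by linarith
      have hp : lam * x A / (1 + lam * x A) ≤ 1 := by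
        rw [div_le_one h1t]; linarith
      have hp0 : 0 ≤ lam * x A / (1 + lam * x A) := by positivity
      nlinarith
  have step2 : c * ∑ A ∈ E, (if x A ∈ Set.Icc ε ε⁻¹ then (1 : ℝ) else 0) ≤
      ∑ A ∈ E, (lam * x A / (1 + lam * x A)) * (1 - lam * x A / (1 + lam * x A)) := by
    rw [Finset.mul_sum]
    exact Finset.sum_le_sum step1
  have step3 : (E.card : ℝ) / 2 ≤ ∑ A ∈ E, (if x A ∈ Set.Icc ε ε⁻¹ then (1 : ℝ) else 0) := by
    rw [inv_mul_eq_div, le_div_iff₀ hcardR] at key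
    linarith
  calc c / 2 * E.card = c * ((E.card : ℝ) / 2) := by ring
    _ ≤ c * ∑ A ∈ E, (if x A ∈ Set.Icc ε ε⁻¹ then (1 : ℝ) else 0) :=
        mul_le_mul_of_nonneg_left step3 hc0.le
    _ ≤ _ := step2
end

section
/- Let E be a finite set with positive weights x_A > 0 for A in E, let eta be an integer with 0 <= eta <= |E|, let A be an element of E, and set F = E \ {A}. Then for every lambda > 0, the rejective-sampling inclusion probability of A satisfies P_{E,eta}( A in D ) = p_{A,lambda} T_lambda( X_F = eta - 1 ) / ( p_{A,lambda} T_lambda( X_F = eta - 1 ) + q_{A,lambda} T_lambda( X_F = eta ) ), where p_{A,lambda} = lambda x_A / (1 + lambda x_A), q_{A,lambda} = 1 - p_{A,lambda}. -/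
open Finset

/-- `p_{A,λ} = λ x_A / (1 + λ x_A)`. -/
noncomputable def bernProb (x : ℕ → ℝ) (lam : ℝ) (A : ℕ) : ℝ :=
  lam * x A / (1 + lam * x A)

/-- `T_λ(X_F = k)`: the probability, under the product measure with independent Bernoulli
indicators of success probabilities `p_{A,λ}`, `A ∈ F`, that exactly `k` of them equal one;
interpreted as `0` for negative integers `k`. -/
noncomputable def TXeq (x : ℕ → ℝ) (lam : ℝ) (F : Finset ℕ) (k : ℤ) : ℝ :=
  if 0 ≤ k then
    ∑ u ∈ F.powersetCard k.toNat,
      (∏ A ∈ u, bernProb x lam A) * ∏ A ∈ F \ u, (1 - bernProb x lam A)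
  else 0

/-- The rejective-sampling inclusion probability `P_{E,η}(A ∈ D)`, where
`P_{E,η}(D = d) = x_d / ∑_{u ⊆ E, |u| = η} x_u` on size-`η` subsets `d` of `E`. -/
noncomputable def inclProb (x : ℕ → ℝ) (E : Finset ℕ) (η : ℕ) (A : ℕ) : ℝ :=
  (∑ d ∈ (E.powersetCard η).filter (fun d => A ∈ d), ∏ B ∈ d, x B) /
    ∑ d ∈ E.powersetCard η, ∏ B ∈ d, x B

lemma TXeq_nat (x : ℕ → ℝ) (hx : ∀ A, 0 < x A) (lam : ℝ) (hlam : 0 < lam)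
    (F : Finset ℕ) (k : ℕ) :
    TXeq x lam F (k : ℤ) =
      (∏ B ∈ F, (1 + lam * x B))⁻¹ *
        (lam ^ k * ∑ u ∈ F.powersetCard k, ∏ B ∈ u, x B) := by
  have hne : ∀ B, (1:ℝ) + lam * x B ≠ 0 := fun B => by
    have := hx B; positivity
  unfold TXeq
  rw [if_pos (Int.ofNat_nonneg k)]
  simp only [Int.toNat_natCast]
  rw [Finset.mul_sum, Finset.mul_sum]
  refine Finset.sum_congr rfl (fun u hu => ?_)
  obtain ⟨hsub, hcard⟩ := Finset.mem_powersetCard.mp hu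
  have hPF : (∏ B ∈ F \ u, (1 + lam * x B)) * ∏ B ∈ u, (1 + lam * x B)
      = ∏ B ∈ F, (1 + lam * x B) := Finset.prod_sdiff hsub
  have h2 : ∏ B ∈ F \ u, (1 - bernProb x lam B)
      = (∏ B ∈ F \ u, (1 + lam * x B))⁻¹ := by
    rw [← Finset.prod_inv_distrib]
    refine Finset.prod_congr rfl (fun B _ => ?_)
    unfold bernProb
    rw [inv_eq_one_div, eq_div_iff (hne B), sub_mul, div_mul_cancel₀ _ (hne B)]
    ring
  have h1 : ∏ B ∈ u, bernProb x lam B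
      = (lam ^ k * ∏ B ∈ u, x B) / ∏ B ∈ u, (1 + lam * x B) := by
    unfold bernProb
    rw [Finset.prod_div_distrib, Finset.prod_mul_distrib, Finset.prod_const, hcard]
  rw [h1, h2]
  have hu0 : (∏ B ∈ u, (1 + lam * x B)) ≠ 0 :=
    Finset.prod_ne_zero_iff.mpr (fun B _ => hne B)
  have hv0 : (∏ B ∈ F \ u, (1 + lam * x B)) ≠ 0 :=
    Finset.prod_ne_zero_iff.mpr (fun B _ => hne B)
  rw [← hPF]
  field_simp

/-- Lemma 3.5, equation (44): for `A ∈ E` and `F = E \ {A}`, for every `λ > 0`,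
`P_{E,η}(A ∈ D) = p_{A,λ} T_λ(X_F = η-1) / (p_{A,λ} T_λ(X_F = η-1) + q_{A,λ} T_λ(X_F = η))`. -/
theorem inclProb_eq_bernoulli_ratio
    (x : ℕ → ℝ) (hx : ∀ A, 0 < x A) (E : Finset ℕ) (A : ℕ) (hA : A ∈ E)
    (η : ℕ) (hη : η ≤ E.card) (lam : ℝ) (hlam : 0 < lam) :
    inclProb x E η A =
      bernProb x lam A * TXeq x lam (E.erase A) ((η : ℤ) - 1) /
        (bernProb x lam A * TXeq x lam (E.erase A) ((η : ℤ) - 1) +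
          (1 - bernProb x lam A) * TXeq x lam (E.erase A) (η : ℤ)) := by
  set F := E.erase A with hF
  have hAF : A ∉ F := Finset.notMem_erase A E
  have hE : insert A F = E := Finset.insert_erase hA
  have hxA := hx A
  have hneA : (1:ℝ) + lam * x A ≠ 0 := by positivity
  obtain rfl | ⟨m, rfl⟩ : η = 0 ∨ ∃ m, η = m + 1 := by
    cases η with
    | zero => exact Or.inl rfl
    | succ m => exact Or.inr ⟨m, rfl⟩
  · -- η = 0
    have h1 : TXeq x lam F ((0:ℤ) - 1) = 0 := by
      unfold TXeq; norm_num
    simp only [Nat.cast_zero]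
    rw [h1]
    unfold inclProb
    rw [Finset.powersetCard_zero]
    simp [Finset.filter_singleton, hAF]
  · -- η = m + 1
    have hcast : ((m + 1 : ℕ) : ℤ) - 1 = (m : ℤ) := by push_cast; ring
    rw [hcast, TXeq_nat x hx lam hlam, TXeq_nat x hx lam hlam]
    set C : ℝ := (∏ B ∈ F, (1 + lam * x B))⁻¹ with hC
    set Sm : ℝ := ∑ u ∈ F.powersetCard m, ∏ B ∈ u, x B with hSm
    set Sm1 : ℝ := ∑ u ∈ F.powersetCard (m + 1), ∏ B ∈ u, x B with hSm1
    have hsplit : E.powersetCard (m + 1) =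
        F.powersetCard (m + 1) ∪ (F.powersetCard m).image (insert A) := by
      rw [← hE, Finset.powersetCard_succ_insert hAF]
    have hdisj : Disjoint (F.powersetCard (m + 1)) ((F.powersetCard m).image (insert A)) := by
      rw [Finset.disjoint_left]
      intro d hd hd'
      obtain ⟨hsub, _⟩ := Finset.mem_powersetCard.mp hd
      obtain ⟨u, hu, rfl⟩ := Finset.mem_image.mp hd'
      exact hAF (hsub (Finset.mem_insert_self A u))
    have himg : ∑ d ∈ (F.powersetCard m).image (insert A), ∏ B ∈ d, x B = x A * Sm := by
      rw [Finset.sum_image, hSm, Finset.mul_sum]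
      · refine Finset.sum_congr rfl (fun u hu => ?_)
        obtain ⟨hsub, _⟩ := Finset.mem_powersetCard.mp hu
        rw [Finset.prod_insert (fun h => hAF (hsub h))]
      · intro u hu v hv h
        obtain ⟨hsu, _⟩ := Finset.mem_powersetCard.mp hu
        obtain ⟨hsv, _⟩ := Finset.mem_powersetCard.mp hv
        have hAu : A ∉ u := fun h' => hAF (hsu h')
        have hAv : A ∉ v := fun h' => hAF (hsv h')
        rw [← Finset.erase_insert hAu, ← Finset.erase_insert hAv, h]
    have hden : ∑ d ∈ E.powersetCard (m + 1), ∏ B ∈ d, x B = x A * Sm + Sm1 := by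
      rw [hsplit, Finset.sum_union hdisj, himg, hSm1]; ring
    have hnum : ∑ d ∈ (E.powersetCard (m + 1)).filter (fun d => A ∈ d), ∏ B ∈ d, x B
        = x A * Sm := by
      rw [hsplit, Finset.filter_union]
      have h1 : (F.powersetCard (m + 1)).filter (fun d => A ∈ d) = ∅ := by
        rw [Finset.filter_eq_empty_iff]
        intro d hd
        obtain ⟨hsub, _⟩ := Finset.mem_powersetCard.mp hd
        exact fun h => hAF (hsub h)
      have h2 : ((F.powersetCard m).image (insert A)).filter (fun d => A ∈ d)
          = (F.powersetCard m).image (insert A) := by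
        rw [Finset.filter_eq_self]
        intro d hd
        obtain ⟨u, hu, rfl⟩ := Finset.mem_image.mp hd
        exact Finset.mem_insert_self A u
      rw [h1, h2, Finset.empty_union, himg]
    unfold inclProb
    rw [hnum, hden]
    -- RHS simplification
    unfold bernProb
    have hC0 : C ≠ 0 := by
      rw [hC]
      exact inv_ne_zero (Finset.prod_ne_zero_iff.mpr (fun B _ => by have := hx B; positivity))
    have h1mp : 1 - lam * x A / (1 + lam * x A) = (1 + lam * x A)⁻¹ := by
      field_simp
      ring
    rw [h1mp]
    have hpT : lam * x A / (1 + lam * x A) * (C * (lam ^ m * Sm))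
        = (C * lam ^ (m + 1) / (1 + lam * x A)) * (x A * Sm) := by
      field_simp; ring
    have hqT : (1 + lam * x A)⁻¹ * (C * (lam ^ (m + 1) * Sm1))
        = (C * lam ^ (m + 1) / (1 + lam * x A)) * Sm1 := by
      field_simp
    rw [hpT, hqT, ← mul_add]
    have ht : C * lam ^ (m + 1) / (1 + lam * x A) ≠ 0 := by
      apply div_ne_zero _ hneA
      exact mul_ne_zero hC0 (pow_ne_zero _ (ne_of_gt hlam))
    rw [mul_div_mul_left _ _ ht]
end

section
/- Let E be a finite set with positive weights x_A > 0, let u and v be disjoint subsets of E, let A be an element of E \ (u union v), let H be a subset of E \ (u union v union {A}), and let eta be an integer with |u| + |H| <= eta and eta + |v| + |H| <= |E|. Then Delta^H P^{u,v}_{E,eta}( A in D ) = (-1)^{|H|} Delta^{|H|} P^{u,v}_{E \ H, eta}( A in D ), where on the left Delta^H is the iterated set-conditioning difference over the elements of H, and on the right Delta^{t} is the t-fold difference in the sample size: Delta f(eta) = f(eta) - f(eta - 1) applied to eta -> P^{u,v}_{E \ H, eta}( A in D ). -/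
open Finset

/-- The conditioned rejective sampling measure `P^{u,v}_{E,η}(D = d)`. -/
noncomputable def condP (x : ℕ → ℝ) (E : Finset ℕ) (η : ℕ) (u v d : Finset ℕ) : ℝ :=
  if u ⊆ d ∧ Disjoint d v ∧ d ⊆ E ∧ d.card = η then
    (∏ A ∈ d, x A) /
      ∑ w ∈ (E.powersetCard η).filter (fun w => u ⊆ w ∧ Disjoint w v), ∏ A ∈ w, x A
  else 0

/-- The inclusion probability `P^{u,v}_{E,η}(A ∈ D)`. -/
noncomputable def condIncl (x : ℕ → ℝ) (E : Finset ℕ) (η : ℕ) (u v : Finset ℕ) (A : ℕ) : ℝ :=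
  ∑ d ∈ E.powerset.filter (fun d => A ∈ d), condP x E η u v d

/-- The iterated set-conditioning difference:
`Δ^B f (u, v) = f (u ∪ {B}, v) - f (u, v ∪ {B})`, iterated over a list of elements. -/
noncomputable def deltaIter (f : Finset ℕ → Finset ℕ → ℝ) :
    List ℕ → Finset ℕ → Finset ℕ → ℝ
  | [], u, v => f u v
  | B :: L, u, v => deltaIter f L (insert B u) v - deltaIter f L u (insert B v)

/-- The `t`-fold difference in the sample size: `Δ f (η) = f (η) - f (η - 1)`. -/
noncomputable def natDelta (f : ℕ → ℝ) : ℕ → ℕ → ℝ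
  | 0, η => f η
  | t + 1, η => natDelta f t η - natDelta f t (η - 1)

lemma condIncl_eq (x : ℕ → ℝ) (E : Finset ℕ) (η : ℕ) (u v : Finset ℕ) (A : ℕ) :
    condIncl x E η u v A =
      (∑ d ∈ (E.powersetCard η).filter (fun d => A ∈ d ∧ u ⊆ d ∧ Disjoint d v), ∏ B ∈ d, x B) /
      (∑ w ∈ (E.powersetCard η).filter (fun w => u ⊆ w ∧ Disjoint w v), ∏ B ∈ w, x B) := by
  unfold condIncl condP
  rw [Finset.sum_div, ← Finset.sum_filter]
  apply Finset.sum_congr _ (fun _ _ => rfl)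
  ext d
  simp only [mem_filter, mem_powersetCard, mem_powerset]
  tauto

lemma condIncl_insert_v (x : ℕ → ℝ) (E : Finset ℕ) (η : ℕ) (u v : Finset ℕ) (A B : ℕ) :
    condIncl x E η u (insert B v) A = condIncl x (E \ {B}) η u v A := by
  rw [condIncl_eq, condIncl_eq]
  congr 1
  · apply Finset.sum_congr _ (fun _ _ => rfl)
    ext d
    simp only [mem_filter, mem_powersetCard, Finset.disjoint_insert_right, Finset.subset_sdiff,
      Finset.disjoint_singleton_right]
    tauto
  · apply Finset.sum_congr _ (fun _ _ => rfl)
    ext w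
    simp only [mem_filter, mem_powersetCard, Finset.disjoint_insert_right, Finset.subset_sdiff,
      Finset.disjoint_singleton_right]
    tauto

lemma shift_sum (x : ℕ → ℝ) (E u v : Finset ℕ) (B : ℕ) (n : ℕ)
    (q : Finset ℕ → Prop) [DecidablePred q]
    (hB : B ∈ E) (hBu : B ∉ u) (hBv : B ∉ v)
    (hq : ∀ s, B ∉ s → (q (insert B s) ↔ q s)) :
    ∑ w ∈ (E.powersetCard (n+1)).filter (fun w => q w ∧ insert B u ⊆ w ∧ Disjoint w v),
        ∏ a ∈ w, x a
      = x B * ∑ w ∈ ((E \ {B}).powersetCard n).filter (fun w => q w ∧ u ⊆ w ∧ Disjoint w v),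
        ∏ a ∈ w, x a := by
  rw [Finset.mul_sum]
  refine Finset.sum_nbij' (fun w => w.erase B) (fun w => insert B w) ?_ ?_ ?_ ?_ ?_
  · intro w hw
    simp only [mem_filter, mem_powersetCard] at hw ⊢
    obtain ⟨⟨hwE, hwc⟩, hqw, hins, hdis⟩ := hw
    have hBw : B ∈ w := hins (mem_insert_self B u)
    refine ⟨⟨?_, ?_⟩, ?_, ?_, ?_⟩
    · intro a ha
      simp only [mem_sdiff, mem_singleton]
      exact ⟨hwE (mem_of_mem_erase ha), ne_of_mem_erase ha⟩
    · rw [card_erase_of_mem hBw, hwc]; rfl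
    · have h := hq (w.erase B) (notMem_erase B w)
      rw [insert_erase hBw] at h
      exact h.mp hqw
    · intro a ha
      exact mem_erase_of_ne_of_mem (fun h => hBu (h ▸ ha)) (hins (mem_insert_of_mem ha))
    · exact Finset.disjoint_of_subset_left (erase_subset B w) hdis
  · intro w hw
    simp only [mem_filter, mem_powersetCard, Finset.subset_sdiff,
      Finset.disjoint_singleton_right] at hw ⊢
    obtain ⟨⟨⟨hwE, hBw⟩, hwc⟩, hqw, hsub, hdis⟩ := hw
    refine ⟨⟨insert_subset hB hwE, ?_⟩, ?_, insert_subset_insert _ hsub, ?_⟩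
    · rw [card_insert_of_notMem hBw, hwc]
    · exact (hq w hBw).mpr hqw
    · rw [Finset.disjoint_insert_left]
      exact ⟨hBv, hdis⟩
  · intro w hw
    simp only [mem_filter, mem_powersetCard] at hw
    exact insert_erase (hw.2.2.1 (mem_insert_self B u))
  · intro w hw
    simp only [mem_filter, mem_powersetCard, Finset.subset_sdiff,
      Finset.disjoint_singleton_right] at hw
    exact erase_insert hw.1.1.2
  · intro w hw
    simp only [mem_filter, mem_powersetCard] at hw
    exact (Finset.mul_prod_erase w x (hw.2.2.1 (mem_insert_self B u))).symm

lemma condIncl_insert_u (x : ℕ → ℝ) (hx : ∀ A, 0 < x A) (E : Finset ℕ) (η : ℕ)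
    (u v : Finset ℕ) (A B : ℕ)
    (hB : B ∈ E) (hBu : B ∉ u) (hBv : B ∉ v) (hBA : B ≠ A) :
    condIncl x E η (insert B u) v A = condIncl x (E \ {B}) (η - 1) u v A := by
  rcases η with _ | n
  · rw [condIncl_eq, condIncl_eq]
    rw [show ((E.powersetCard 0).filter (fun d => A ∈ d ∧ insert B u ⊆ d ∧ Disjoint d v)) = ∅ by
      ext d
      simp only [mem_filter, mem_powersetCard, Finset.card_eq_zero, notMem_empty, iff_false]
      rintro ⟨⟨-, rfl⟩, -, hsub, -⟩
      exact notMem_empty B (hsub (mem_insert_self B u))]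
    rw [show (((E \ {B}).powersetCard (0-1)).filter (fun d => A ∈ d ∧ u ⊆ d ∧ Disjoint d v)) = ∅ by
      ext d
      simp only [mem_filter, mem_powersetCard, notMem_empty, iff_false]
      rintro ⟨⟨-, hc⟩, hA, -⟩
      rw [Finset.card_eq_zero.mp hc] at hA
      exact notMem_empty A hA]
    simp
  · rw [condIncl_eq, condIncl_eq]
    have hnum := shift_sum x E u v B n (fun d => A ∈ d) hB hBu hBv
      (fun s hs => by simp [mem_insert, Ne.symm hBA])
    have hden := shift_sum x E u v B n (fun _ => True) hB hBu hBv (fun s hs => Iff.rfl)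
    simp only [true_and] at hden
    rw [show n + 1 - 1 = n from rfl, hnum, hden,
      mul_div_mul_left _ _ (ne_of_gt (hx B))]

lemma natDelta_shift (f : ℕ → ℝ) (t : ℕ) : ∀ η, natDelta (fun m => f (m - 1)) t η = natDelta f t (η - 1) := by
  induction t with
  | zero => intro η; rfl
  | succ t ih => intro η; simp only [natDelta, ih]

lemma natDelta_condIncl_shift (x : ℕ → ℝ) (S u v : Finset ℕ) (A t : ℕ) :
    ∀ η, natDelta (fun m => condIncl x S (m - 1) u v A) t η
      = natDelta (fun m => condIncl x S m u v A) t (η - 1) := by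
  induction t with
  | zero => intro η; rfl
  | succ t ih => intro η; simp only [natDelta, ih]

lemma natDelta_succ (f : ℕ → ℝ) (t η : ℕ) :
    natDelta f t (η - 1) - natDelta f t η = -(natDelta f (t + 1) η) := by
  simp only [natDelta]; ring

lemma main_induction (x : ℕ → ℝ) (hx : ∀ A, 0 < x A) (A : ℕ) (E : Finset ℕ) (η : ℕ) :
    ∀ (L : List ℕ) (u v : Finset ℕ), L.Nodup →
      (∀ B ∈ L, B ∈ E ∧ B ∉ u ∧ B ∉ v ∧ B ≠ A) →
      deltaIter (fun u' v' => condIncl x E η u' v' A) L u v =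
        (-1 : ℝ) ^ L.length * natDelta (fun m => condIncl x (E \ L.toFinset) m u v A) L.length η := by
  intro L
  induction L with
  | nil =>
    intro u v _ _
    simp [deltaIter, natDelta]
  | cons B L ih =>
    intro u v hnd hmem
    have hndL : L.Nodup := (List.nodup_cons.mp hnd).2
    have hBL : B ∉ L := (List.nodup_cons.mp hnd).1
    obtain ⟨hBE, hBu, hBv, hBA⟩ := hmem B List.mem_cons_self
    rw [deltaIter]
    rw [ih (insert B u) v hndL (fun C hC => by
      obtain ⟨h1, h2, h3, h4⟩ := hmem C (List.mem_cons_of_mem B hC)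
      exact ⟨h1, by simp [mem_insert]; exact ⟨fun h => hBL (h ▸ hC), h2⟩, h3, h4⟩)]
    rw [ih u (insert B v) hndL (fun C hC => by
      obtain ⟨h1, h2, h3, h4⟩ := hmem C (List.mem_cons_of_mem B hC)
      exact ⟨h1, h2, by simp [mem_insert]; exact ⟨fun h => hBL (h ▸ hC), h3⟩, h4⟩)]
    have hBnotL : B ∉ E \ L.toFinset → False := fun h => h (mem_sdiff.mpr ⟨hBE, by simpa using hBL⟩)
    have hB' : B ∈ E \ L.toFinset := mem_sdiff.mpr ⟨hBE, by simpa using hBL⟩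
    have hset : (E \ L.toFinset) \ {B} = E \ (B :: L).toFinset := by
      ext a
      simp only [mem_sdiff, mem_singleton, List.toFinset_cons, mem_insert, List.mem_toFinset]
      tauto
    have e1 : (fun m => condIncl x (E \ L.toFinset) m (insert B u) v A)
        = fun m => condIncl x (E \ (B :: L).toFinset) (m - 1) u v A := by
      funext m
      rw [condIncl_insert_u x hx _ m u v A B hB' hBu hBv hBA, hset]
    have e2 : (fun m => condIncl x (E \ L.toFinset) m u (insert B v) A)
        = fun m => condIncl x (E \ (B :: L).toFinset) m u v A := by
      funext m
      rw [condIncl_insert_v, hset]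
    rw [e1, e2, natDelta_condIncl_shift, List.length_cons]
    simp only [natDelta, pow_succ]
    ring

/-- Lemma 4.1, equation (54): for `A ∉ u ∪ v`, `H ⊆ E \ (u ∪ v ∪ {A})`,
`Δ^H P^{u,v}_{E,η}(A ∈ D) = (-1)^{|H|} Δ^{|H|} P^{u,v}_{E \ H, η}(A ∈ D)`,
where on the right `Δ^t` is the `t`-fold difference in the sample size `η`. -/
theorem deltaIter_condIncl_eq_natDelta
    (x : ℕ → ℝ) (hx : ∀ A, 0 < x A)
    (E u v H : Finset ℕ) (A : ℕ)
    (huv : Disjoint u v) (hu : u ⊆ E) (hv : v ⊆ E)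
    (hA : A ∈ E \ (u ∪ v)) (hH : H ⊆ E \ (u ∪ v ∪ {A}))
    (η : ℕ) (h1 : u.card + H.card ≤ η) (h2 : η + v.card + H.card ≤ E.card) :
    deltaIter (fun u' v' => condIncl x E η u' v' A) (H.sort (· ≤ ·)) u v =
      (-1 : ℝ) ^ H.card * natDelta (fun m => condIncl x (E \ H) m u v A) H.card η := by
  have hnd := H.sort_nodup (· ≤ ·)
  have hmem : ∀ B ∈ H.sort (· ≤ ·), B ∈ E ∧ B ∉ u ∧ B ∉ v ∧ B ≠ A := by
    intro B hB
    rw [Finset.mem_sort] at hB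
    have := hH hB
    simp only [mem_sdiff, mem_union, mem_singleton, not_or] at this
    tauto
  have := main_induction x hx A E η (H.sort (· ≤ ·)) u v hnd hmem
  rwa [Finset.sort_toFinset, Finset.length_sort] at this
end
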